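/- Let K ≥ 2, let ε > 0, and let θ : {1,…,K} → ℝ have a unique best arm I* (θ_{I*} > θ_j for all j ≠ I*). For each arm i and allocation p in the probability simplex S_K define C^i_j(p) = (θ_i − θ_j + ε)² p_i p_j / (2(p_i + p_j)) for j ≠ i (with the convention 0 when p_i = p_j = 0), and set G_i = sup_{p ∈ S_K} min_{j ≠ i} C^i_j(p). Then for every arm i with θ_i ≥ θ_{I*} − ε one has G_i ≤ G_{I*}; consequently, the maximum of G_i over the set of ε-good arms {i : θ_i ≥ θ_{I*} − ε} equals G_{I*}. -/

import Mathlib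

/-- In Gaussian ε-best-arm identification with unit variances, the best
arm `I*` is the easiest arm to certify as ε-good: `G_i ≤ G_{I*}` for every ε-good arm
`i`, hence the maximum of `G_i` over ε-good arms equals `G_{I*}`, where
`G_i = sup_{p ∈ S_K} min_{j ≠ i} C^i_j(p)` and
`C^i_j(p) = (θ_i − θ_j + ε)² p_i p_j / (2(p_i + p_j))`. -/
theorem stmt16 (K : ℕ) (hK : 2 ≤ K) (ε : ℝ) (hε : 0 < ε)
    (θ : Fin K → ℝ) (Istar : Fin K) (hbest : ∀ j, j ≠ Istar → θ j < θ Istar) :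
    let S : Set (Fin K → ℝ) := {p | (∀ i, 0 ≤ p i) ∧ ∑ i, p i = 1}
    let C : Fin K → Fin K → (Fin K → ℝ) → ℝ := fun i j p =>
      (θ i - θ j + ε) ^ 2 * p i * p j / (2 * (p i + p j))
    let G : Fin K → ℝ := fun i =>
      sSup ((fun p => ⨅ j : {j : Fin K // j ≠ i}, C i j p) '' S)
    (∀ i : Fin K, θ Istar - ε ≤ θ i → G i ≤ G Istar) ∧
    IsGreatest (G '' {i : Fin K | θ Istar - ε ≤ θ i}) (G Istar) := by
  intro S C G
  have hKpos : 0 < K := by omega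
  have hcard : 1 < Fintype.card (Fin K) := by rw [Fintype.card_fin]; omega
  have hne : ∀ i : Fin K, Nonempty {j : Fin K // j ≠ i} := by
    intro i
    obtain ⟨j, hj⟩ := Fintype.exists_ne_of_one_lt_card hcard i
    exact ⟨⟨j, hj⟩⟩
  -- uniform allocation shows S is nonempty
  have huni : (fun _ : Fin K => (K : ℝ)⁻¹) ∈ S := by
    constructor
    · intro _; positivity
    · simp [Finset.sum_const, Finset.card_univ]
      field_simp
  have hSne : S.Nonempty := ⟨_, huni⟩
  -- pointwise bound on C
  have hCle : ∀ (i j : Fin K) (p : Fin K → ℝ), p ∈ S →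
      C i j p ≤ (θ i - θ j + ε) ^ 2 / 2 := by
    intro i j p hp
    have hpi := hp.1 i
    have hpj := hp.1 j
    have hpj1 : p j ≤ 1 := by
      rw [← hp.2]
      exact Finset.single_le_sum (f := p) (fun k _ => hp.1 k) (Finset.mem_univ j)
    by_cases hd : p i + p j = 0
    · simp only [C, hd, mul_zero, div_zero]
      positivity
    · have hd' : 0 < p i + p j := lt_of_le_of_ne (by linarith) (Ne.symm hd)
      have h2 : (0:ℝ) < 2 * (p i + p j) := by linarith
      rw [div_le_iff₀ h2]
      have hg : 0 ≤ (θ i - θ j + ε) ^ 2 := sq_nonneg _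
      nlinarith [mul_nonneg hg hpi, mul_nonneg hg hpj,
        mul_nonneg (mul_nonneg hg hpi) (sub_nonneg.mpr hpj1)]
    -- end
  have hCnonneg : ∀ (i j : Fin K) (p : Fin K → ℝ), p ∈ S → 0 ≤ C i j p := by
    intro i j p hp
    have := hp.1 i
    have := hp.1 j
    have : (0:ℝ) ≤ 2 * (p i + p j) := by linarith [hp.1 i, hp.1 j]
    exact div_nonneg (by positivity) this
  have hbdd : ∀ i : Fin K,
      BddAbove ((fun p => ⨅ j : {j : Fin K // j ≠ i}, C i j p) '' S) := by
    intro i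
    obtain ⟨j₀⟩ := hne i
    refine ⟨(θ i - θ (j₀ : Fin K) + ε) ^ 2 / 2, ?_⟩
    rintro x ⟨p, hp, rfl⟩
    refine le_trans ?_ (hCle i j₀ p hp)
    exact ciInf_le (Set.Finite.bddBelow (Set.finite_range _)) j₀
  -- key step
  have hkey : ∀ i : Fin K, θ Istar - ε ≤ θ i → ∀ p ∈ S,
      (⨅ j : {j : Fin K // j ≠ i}, C i j p) ≤ G Istar := by
    intro i hi p hp
    by_cases hii : i = Istar
    · subst hii
      exact le_csSup (hbdd i) ⟨p, hp, rfl⟩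
    · set σ := Equiv.swap i Istar with hσ
      set q : Fin K → ℝ := fun j => p (σ j) with hq
      have hqS : q ∈ S := by
        constructor
        · intro j; exact hp.1 _
        · rw [← hp.2]
          exact Equiv.sum_comp σ p
      have hiI : θ i ≤ θ Istar := le_of_lt (hbest i hii)
      have step : (⨅ j : {j : Fin K // j ≠ i}, C i j p) ≤
          ⨅ j : {j : Fin K // j ≠ Istar}, C Istar j q := by
        refine le_ciInf ?_
        rintro ⟨j, hj⟩
        have hσj : σ j ≠ i := by
          intro h
          apply hj
          have : σ j = σ Istar := by
            rw [h, hσ]; simp [Equiv.swap_apply_right]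
          exact σ.injective this
        refine le_trans (ciInf_le (Set.Finite.bddBelow (Set.finite_range _))
          ⟨σ j, hσj⟩) ?_
        -- C i (σ j) p ≤ C Istar j q
        have hqI : q Istar = p i := by
          simp [hq, hσ, Equiv.swap_apply_right]
        have hqj : q j = p (σ j) := rfl
        simp only [C, hqI, hqj]
        have hgap : (θ i - θ (σ j) + ε) ^ 2 ≤ (θ Istar - θ j + ε) ^ 2 := by
          by_cases hji : j = i
          · subst hji
            have : σ j = Istar := by simp [hσ, Equiv.swap_apply_left]
            rw [this]
            nlinarith [sub_nonneg.mpr hiI]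
          · have : σ j = j := by
              rw [hσ]; exact Equiv.swap_apply_of_ne_of_ne hji hj
            rw [this]
            have hjI : θ j < θ Istar := hbest j hj
            nlinarith
        have hpi := hp.1 i
        have hpσj := hp.1 (σ j)
        by_cases hd : p i + p (σ j) = 0
        · rw [hd]
          simp
        · have hd' : (0:ℝ) < 2 * (p i + p (σ j)) := by
            have : 0 < p i + p (σ j) := lt_of_le_of_ne (by linarith) (Ne.symm hd)
            linarith
          rw [div_le_div_iff₀ hd' hd']
          have hnum : (θ i - θ (σ j) + ε) ^ 2 * p i * p (σ j) ≤
              (θ Istar - θ j + ε) ^ 2 * p i * p (σ j) :=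
            mul_le_mul_of_nonneg_right (mul_le_mul_of_nonneg_right hgap hpi) hpσj
          nlinarith [hnum, hd'.le]
      exact le_trans step (le_csSup (hbdd Istar) ⟨q, hqS, rfl⟩)
  have hmain : ∀ i : Fin K, θ Istar - ε ≤ θ i → G i ≤ G Istar := by
    intro i hi
    refine csSup_le (hSne.image _) ?_
    rintro x ⟨p, hp, rfl⟩
    exact hkey i hi p hp
  refine ⟨hmain, ⟨⟨Istar, by simp; linarith, rfl⟩, ?_⟩⟩
  rintro x ⟨i, hi, rfl⟩
  exact hmain i hi
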